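/- arXiv:1908.05800 — 2 statements merged into one kernel-verified Lean document; each statement's English description precedes it below -/
import Mathlib

section
/- (Theorem 4.6, lower bound) Let k > 0, let p ∈ ℝ³ with p ≠ 0, let Ω ⊂ ℝ³ be a bounded measurable set of positive Lebesgue measure, and let T be a bounded linear operator on L²(Ω,ℂ³) such that |⟨Th,h⟩| ≥ c‖h‖² for some c > 0 and all h in the L²-closure of H(L²_t(S²)). Suppose y ∈ ℝ³ is such that there exists ψ ∈ L²(Ω,ℂ³), ψ ≠ 0, with φ_y(d) = d × (∫_Ω ψ(x) e^{−ik x·d} dx) × d for σ-a.e. d ∈ S². Then the DSM imaging functional satisfies I_DSM(y) ≥ c ‖φ_y‖⁴_{L²(S²,ℂ³)} / ‖ψ‖²_{L²(Ω,ℂ³)}, and this lower bound is strictly positive. -/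
open MeasureTheory Metric Complex

noncomputable section

abbrev R3 : Type := EuclideanSpace ℝ (Fin 3)
abbrev C3 : Type := EuclideanSpace ℂ (Fin 3)
abbrev S2 : Type := Metric.sphere (0 : R3) 1

/-- The surface measure on the unit sphere `S²` (total mass `4π`). -/
def σS : Measure S2 := (volume : Measure R3).toSphere

/-- Componentwise complexification of a real vector. -/
def cm (x : R3) : C3 := WithLp.toLp 2 (fun i => (x i : ℂ))

/-- Real dot product on `ℝ³`. -/
def dotR (a b : R3) : ℝ := ∑ i, a i * b i

/-- Bilinear (unconjugated) dot product on `ℂ³`. -/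
def dotc (a b : C3) : ℂ := ∑ i, a i * b i

/-- Cross product on `ℂ³`, extended bilinearly. -/
def crossc (a b : C3) : C3 := WithLp.toLp 2 (crossProduct a b)

/-- Hermitian pairing `a · conj b`. -/
def hdot (a b : C3) : ℂ := ∑ i, a i * (starRingEnd ℂ) (b i)

/-- The test function `φ_y(d) = (d×p)×d e^{−ik d·y}`. -/
def phiy (k : ℝ) (p y : R3) (d : S2) : C3 :=
  Complex.exp (-(Complex.I * k * (dotR (d : R3) y))) •
    crossc (crossc (cm (d : R3)) (cm p)) (cm (d : R3))

/-- The Herglotz wave function `(Hg)(x) = ∫_{S²} g(d) e^{ik x·d} dσ(d)`. -/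
def herg (k : ℝ) (g : S2 → C3) (x : R3) : C3 :=
  ∫ d : S2, Complex.exp (Complex.I * k * (dotR x (d : R3))) • g d ∂σS

open Classical in
/-- The `L²` class of a function (`0` if the function is not square integrable). -/
def toL2 {α : Type} [MeasurableSpace α] (μ : Measure α) (f : α → C3) : Lp C3 2 μ :=
  if h : MemLp f 2 μ then h.toLp f else 0

/-- `(H^*f)(d) = d × (∫_Ω f(x) e^{−ik x·d} dx) × d`. -/
def hergSt (k : ℝ) (Ω : Set R3) (f : R3 → C3) (d : S2) : C3 :=
  crossc (crossc (cm (d : R3))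
    (∫ x in Ω, Complex.exp (-(Complex.I * k * (dotR x (d : R3)))) • f x)) (cm (d : R3))

/-- The operator `F` built from the factorization `F = H^* T H`:
`(Fg)(d) = d × (∫_Ω (T(Hg))(x) e^{−ik x·d} dx) × d`. -/
def Fop (k : ℝ) (Ω : Set R3)
    (T : Lp C3 2 (volume.restrict Ω) →L[ℂ] Lp C3 2 (volume.restrict Ω))
    (g : S2 → C3) (d : S2) : C3 :=
  crossc (crossc (cm (d : R3))
    (∫ x in Ω, Complex.exp (-(Complex.I * k * (dotR x (d : R3)))) •
      (T (toL2 (volume.restrict Ω) (herg k g))) x)) (cm (d : R3))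

/-- The OSM imaging functional `I_OSM(y) = ∫_{S²} |p·(Fφ_y)(x̂)|² dσ(x̂)`. -/
def IOSM (k : ℝ) (Ω : Set R3)
    (T : Lp C3 2 (volume.restrict Ω) →L[ℂ] Lp C3 2 (volume.restrict Ω))
    (p y : R3) : ℝ :=
  ∫ xh : S2, ‖dotc (cm p) (Fop k Ω T (phiy k p y) xh)‖ ^ 2 ∂σS

/-- The DSM imaging functional `I_DSM(y) = |⟨Fφ_y, φ_y⟩_{L²(S²)}|`. -/
def IDSM (k : ℝ) (Ω : Set R3)
    (T : Lp C3 2 (volume.restrict Ω) →L[ℂ] Lp C3 2 (volume.restrict Ω))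
    (p y : R3) : ℝ :=
  ‖∫ d : S2, hdot (Fop k Ω T (phiy k p y) d) (phiy k p y d) ∂σS‖

/-- The set `H(L²_t(S²)) ⊂ L²(Ω,ℂ³)`: images under the Herglotz operator of square
integrable tangential fields. -/
def ranHt (k : ℝ) (Ω : Set R3) : Set (Lp C3 2 (volume.restrict Ω)) :=
  {h | ∃ g : S2 → C3, MemLp g 2 σS ∧ (∀ᵐ (d : S2) ∂σS, dotc (cm d.val) (g d) = 0) ∧
    h = toL2 (volume.restrict Ω) (herg k g)}



open scoped ENNReal Pointwise

lemma hdot_eq_inner (a b : C3) : hdot a b = @inner ℂ C3 _ b a := by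
  simp [hdot, PiLp.inner_apply, RCLike.inner_apply, mul_comm]

lemma norm_hdot_le (a b : C3) : ‖hdot a b‖ ≤ ‖a‖ * ‖b‖ := by
  rw [hdot_eq_inner]
  exact (norm_inner_le_norm b a).trans_eq (mul_comm _ _)

lemma hdot_self (a : C3) : hdot a a = (‖a‖^2 : ℝ) := by
  rw [hdot_eq_inner, inner_self_eq_norm_sq_to_K]; norm_cast

lemma crossc_crossc (a A : C3) : crossc (crossc a A) a = (dotc a a) • A - (dotc a A) • a := by
  ext i
  fin_cases i <;>
    simp [crossc, crossProduct, dotc, Fin.sum_univ_three, PiLp.smul_apply, PiLp.sub_apply,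
      smul_eq_mul, PiLp.toLp_apply] <;> ring

lemma hdot_sub (x y v : C3) : hdot (x - y) v = hdot x v - hdot y v := by
  simp [hdot, PiLp.sub_apply, sub_mul, Finset.sum_sub_distrib]

lemma hdot_smul (c : ℂ) (x v : C3) : hdot (c • x) v = c * hdot x v := by
  simp [hdot, PiLp.smul_apply, smul_eq_mul, Finset.mul_sum, mul_assoc]

lemma hdot_smul_right (c : ℂ) (x v : C3) : hdot x (c • v) = (starRingEnd ℂ) c * hdot x v := by
  simp [hdot, PiLp.smul_apply, smul_eq_mul, Finset.mul_sum]; ring_nf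
  simp [mul_assoc, mul_comm, mul_left_comm]

lemma dotc_cm_self (d : S2) : dotc (cm (d : R3)) (cm (d : R3)) = 1 := by
  have hd : ‖(d : R3)‖ = 1 := by
    have := d.2; simpa [mem_sphere_zero_iff_norm] using this
  have h2 : @inner ℝ R3 _ (d : R3) (d : R3) = 1 := by
    rw [real_inner_self_eq_norm_sq, hd]; norm_num
  rw [PiLp.inner_apply] at h2
  simp only [RCLike.inner_apply, conj_trivial] at h2
  have : dotc (cm (d : R3)) (cm (d : R3)) = ((∑ i, (d : R3) i * (d : R3) i : ℝ) : ℂ) := by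
    simp [dotc, cm]
  rw [this, h2]; norm_num

lemma hdot_cm_eq_zero {d : R3} {v : C3} (hv : dotc (cm d) v = 0) : hdot (cm d) v = 0 := by
  have : (starRingEnd ℂ) (hdot (cm d) v) = 0 := by
    rw [← hv]; simp [hdot, dotc, cm, map_sum]
  simpa using congrArg (starRingEnd ℂ) this

lemma proj_hdot (d : S2) (A v : C3) (hv : dotc (cm (d : R3)) v = 0) :
    hdot (crossc (crossc (cm (d : R3)) A) (cm (d : R3))) v = hdot A v := by
  rw [crossc_crossc, hdot_sub, hdot_smul, hdot_smul, dotc_cm_self, hdot_cm_eq_zero hv]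
  ring

lemma dotc_phiy (k : ℝ) (p y : R3) (d : S2) : dotc (cm (d : R3)) (phiy k p y d) = 0 := by
  unfold phiy
  have : dotc (cm (d : R3)) (crossc (crossc (cm (d : R3)) (cm p)) (cm (d : R3))) = 0 := by
    simp [dotc, crossc, crossProduct, Fin.sum_univ_three]; ring
  simp only [dotc, PiLp.smul_apply, smul_eq_mul] at *
  calc ∑ i, cm (d:R3) i * (Complex.exp _ * crossc (crossc (cm (d : R3)) (cm p)) (cm (d : R3)) i) 
      = Complex.exp (-(Complex.I * k * (dotR (d : R3) y))) * ∑ i, cm (d:R3) i * crossc (crossc (cm (d : R3)) (cm p)) (cm (d : R3)) i := by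
        rw [Finset.mul_sum]; congr 1; funext i; ring
    _ = 0 := by rw [this, mul_zero]

lemma continuous_cm_coe : Continuous fun d : S2 => cm (d : R3) := by
  apply (PiLp.continuous_toLp 2 _).comp
  apply continuous_pi
  intro i
  exact Complex.continuous_ofReal.comp ((PiLp.continuous_apply 2 _ i).comp continuous_subtype_val)

lemma continuous_crossc {α : Type*} [TopologicalSpace α] {f g : α → C3}
    (hf : Continuous f) (hg : Continuous g) : Continuous fun a => crossc (f a) (g a) := by
  apply (PiLp.continuous_toLp 2 _).comp
  apply continuous_pi
  intro i
  have hfi : ∀ j, Continuous fun a => f a j := fun j => (PiLp.continuous_apply 2 _ j).comp hf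
  have hgi : ∀ j, Continuous fun a => g a j := fun j => (PiLp.continuous_apply 2 _ j).comp hg
  fin_cases i <;> · simp only [crossc, crossProduct]
                    simp
                    fun_prop

lemma continuous_dotR_right (y : R3) : Continuous fun d : S2 => dotR (d : R3) y := by
  unfold dotR
  apply continuous_finset_sum
  intro i _
  exact (((PiLp.continuous_apply 2 _ i).comp continuous_subtype_val).mul continuous_const)

lemma continuous_phiy (k : ℝ) (p y : R3) : Continuous (phiy k p y) := by
  unfold phiy
  apply Continuous.fun_smul
  · apply Complex.continuous_exp.comp
    exact (continuous_const.mul (Complex.continuous_ofReal.comp (continuous_dotR_right y))).neg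
  · exact continuous_crossc (continuous_crossc continuous_cm_coe continuous_const)
      continuous_cm_coe

instance : IsFiniteMeasure σS := by unfold σS; infer_instance

lemma memℒp_phiy (k : ℝ) (p y : R3) : MemLp (phiy k p y) 2 σS := by
  obtain ⟨C, hC⟩ := isCompact_univ.exists_bound_of_continuousOn
    (continuous_phiy k p y).continuousOn
  exact MemLp.of_bound (continuous_phiy k p y).aestronglyMeasurable C
    (Filter.Eventually.of_forall fun d => hC d trivial)

lemma norm_exp_kernel (z : ℝ) : ‖Complex.exp (Complex.I * z)‖ = 1 := by
  rw [Complex.norm_exp]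
  simp

lemma norm_exp_neg_kernel (k : ℝ) (x d : R3) :
    ‖Complex.exp (-(Complex.I * k * (dotR x d)))‖ = 1 := by
  rw [Complex.norm_exp]
  simp

lemma norm_exp_pos_kernel (k : ℝ) (x d : R3) :
    ‖Complex.exp (Complex.I * k * (dotR x d))‖ = 1 := by
  rw [Complex.norm_exp]
  simp

lemma continuous_dotR_jt : Continuous fun z : R3 × S2 => dotR z.1 (z.2 : R3) := by
  unfold dotR
  apply continuous_finset_sum
  intro i _
  exact ((PiLp.continuous_apply 2 _ i).comp continuous_fst).mul
    ((PiLp.continuous_apply 2 _ i).comp (continuous_subtype_val.comp continuous_snd))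

lemma continuous_dotR_left (x : R3) : Continuous fun d : S2 => dotR x (d : R3) := by
  unfold dotR
  apply continuous_finset_sum
  intro i _
  exact continuous_const.mul ((PiLp.continuous_apply 2 _ i).comp continuous_subtype_val)

lemma integrable_phiy_smul (k : ℝ) (p y : R3) (x : R3) :
    Integrable (fun d : S2 => Complex.exp (Complex.I * k * (dotR x (d : R3))) • phiy k p y d) σS := by
  have h1 : Integrable (fun d : S2 => ‖phiy k p y d‖) σS :=
    ((memℒp_phiy k p y).integrable one_le_two).norm
  refine h1.mono' ?_ (Filter.Eventually.of_forall fun d => ?_)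
  · exact ((Complex.continuous_exp.comp
      ((continuous_const.mul (Complex.continuous_ofReal.comp (continuous_dotR_left x))))).smul
      (continuous_phiy k p y)).aestronglyMeasurable
  · rw [norm_smul, norm_exp_pos_kernel]; simp

lemma continuous_herg (k : ℝ) (p y : R3) : Continuous (herg k (phiy k p y)) := by
  apply continuous_of_dominated (bound := fun d => ‖phiy k p y d‖)
  · intro x
    exact (integrable_phiy_smul k p y x).1
  · intro x
    refine Filter.Eventually.of_forall fun d => ?_
    rw [norm_smul, norm_exp_pos_kernel]; simp
  · exact ((memℒp_phiy k p y).integrable one_le_two).norm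
  · refine Filter.Eventually.of_forall fun d => ?_
    have hc : Continuous fun x : R3 => dotR x (d : R3) := by
      unfold dotR
      exact continuous_finset_sum _ fun i _ => (PiLp.continuous_apply 2 _ i).mul continuous_const
    exact (Complex.continuous_exp.comp
      (continuous_const.mul (Complex.continuous_ofReal.comp hc))).smul continuous_const

local notation "⟪" x ", " y "⟫" => @inner ℂ C3 _ x y

lemma integrable_kernel_smul (k : ℝ) (Ω : Set R3) {f₀ : R3 → C3}
    (hf_int : Integrable f₀ (volume.restrict Ω)) (d : S2) :
    Integrable (fun x => Complex.exp (-(Complex.I * k * (dotR x (d : R3)))) • f₀ x)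
      (volume.restrict Ω) := by
  refine hf_int.norm.mono' ?_ (Filter.Eventually.of_forall fun x => ?_)
  · have hc : Continuous fun x : R3 => dotR x (d : R3) := by
      unfold dotR
      exact continuous_finset_sum _ fun i _ => (PiLp.continuous_apply 2 _ i).mul continuous_const
    exact ((Complex.continuous_exp.comp
      ((continuous_const.mul (Complex.continuous_ofReal.comp hc)).neg)).aestronglyMeasurable).smul
      hf_int.1
  · rw [norm_smul, norm_exp_neg_kernel]; simp

lemma swap_key (k : ℝ) (p y : R3) (Ω : Set R3) {f₀ : R3 → C3}
    [IsFiniteMeasure (volume.restrict Ω)]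
    (hf_int : Integrable f₀ (volume.restrict Ω)) :
    ∫ d : S2, hdot (∫ x in Ω, Complex.exp (-(Complex.I * k * (dotR x (d : R3)))) • f₀ x)
        (phiy k p y d) ∂σS
      = ∫ x in Ω, ⟪herg k (phiy k p y) x, f₀ x⟫ := by
  have stepA : ∀ d : S2,
      hdot (∫ x in Ω, Complex.exp (-(Complex.I * k * (dotR x (d : R3)))) • f₀ x) (phiy k p y d)
      = ∫ x in Ω, Complex.exp (-(Complex.I * k * (dotR x (d : R3)))) * ⟪phiy k p y d, f₀ x⟫ := by
    intro d
    rw [hdot_eq_inner, ← integral_inner (integrable_kernel_smul k Ω hf_int d)]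
    congr 1
    funext x
    rw [inner_smul_right]
  have stepC : ∀ x : R3,
      (∫ d : S2, Complex.exp (-(Complex.I * k * (dotR x (d : R3)))) * ⟪phiy k p y d, f₀ x⟫ ∂σS)
      = ⟪herg k (phiy k p y) x, f₀ x⟫ := by
    intro x
    have h1 : ∀ d : S2, Complex.exp (-(Complex.I * k * (dotR x (d : R3)))) * ⟪phiy k p y d, f₀ x⟫
        = ⟪Complex.exp (Complex.I * k * (dotR x (d : R3))) • phiy k p y d, f₀ x⟫ := by
      intro d
      rw [inner_smul_left]
      congr 1
      rw [← Complex.exp_conj]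
      congr 1
      simp only [map_neg, map_mul, Complex.conj_I, Complex.conj_ofReal]
      ring
    simp_rw [h1]
    have h2 : (fun d : S2 => ⟪Complex.exp (Complex.I * k * (dotR x (d : R3))) • phiy k p y d, f₀ x⟫)
        = fun d : S2 => (starRingEnd ℂ)
            ⟪f₀ x, Complex.exp (Complex.I * k * (dotR x (d : R3))) • phiy k p y d⟫ := by
      funext d; rw [inner_conj_symm]
    rw [h2, integral_conj, integral_inner (integrable_phiy_smul k p y x), inner_conj_symm]
    rfl
  calc ∫ d : S2, hdot (∫ x in Ω, Complex.exp (-(Complex.I * k * (dotR x (d : R3)))) • f₀ x)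
        (phiy k p y d) ∂σS
      = ∫ d : S2, (∫ x in Ω,
          Complex.exp (-(Complex.I * k * (dotR x (d : R3)))) * ⟪phiy k p y d, f₀ x⟫) ∂σS := by
        exact integral_congr_ae (Filter.Eventually.of_forall stepA)
    _ = ∫ x in Ω, ∫ d : S2,
          Complex.exp (-(Complex.I * k * (dotR x (d : R3)))) * ⟪phiy k p y d, f₀ x⟫ ∂σS := by
        apply integral_integral_swap
        have hbd : Integrable (fun z : S2 × R3 => ‖phiy k p y z.1‖ * ‖f₀ z.2‖)
            (σS.prod (volume.restrict Ω)) :=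
          Integrable.mul_prod ((memℒp_phiy k p y).integrable one_le_two).norm hf_int.norm
        refine hbd.mono' ?_ (Filter.Eventually.of_forall fun z => ?_)
        · have hc1 : Continuous fun z : S2 × R3 =>
              Complex.exp (-(Complex.I * k * (dotR z.2 (z.1 : R3)))) := by
            apply Complex.continuous_exp.comp
            exact ((continuous_const.mul (Complex.continuous_ofReal.comp
              (continuous_dotR_jt.comp (continuous_snd.prodMk continuous_fst)))).neg)
          exact hc1.aestronglyMeasurable.mul
            ((((continuous_phiy k p y).comp continuous_fst).aestronglyMeasurable).inner
              (hf_int.1.comp_snd))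
        · rw [Function.uncurry]
          simp only [norm_mul]
          rw [norm_exp_neg_kernel]
          calc (1 : ℝ) * ‖⟪phiy k p y z.1, f₀ z.2⟫‖ ≤ 1 * (‖phiy k p y z.1‖ * ‖f₀ z.2‖) := by
                gcongr
                exact norm_inner_le_norm _ _
            _ = ‖phiy k p y z.1‖ * ‖f₀ z.2‖ := one_mul _
    _ = ∫ x in Ω, ⟪herg k (phiy k p y) x, f₀ x⟫ :=
        integral_congr_ae (Filter.Eventually.of_forall stepC)

lemma memℒp_herg (k : ℝ) (p y : R3) (Ω : Set R3) [IsFiniteMeasure (volume.restrict Ω)] :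
    MemLp (herg k (phiy k p y)) 2 (volume.restrict Ω) := by
  refine MemLp.of_bound (continuous_herg k p y).aestronglyMeasurable
    (∫ d : S2, ‖phiy k p y d‖ ∂σS) (Filter.Eventually.of_forall fun x => ?_)
  calc ‖herg k (phiy k p y) x‖
      ≤ ∫ d : S2, ‖Complex.exp (Complex.I * k * (dotR x (d : R3))) • phiy k p y d‖ ∂σS :=
        norm_integral_le_integral_norm _
    _ = ∫ d : S2, ‖phiy k p y d‖ ∂σS := by
        congr 1; funext d; rw [norm_smul, norm_exp_pos_kernel, one_mul]

lemma integrable_sq_phiy (k : ℝ) (p y : R3) :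
    Integrable (fun d : S2 => ‖phiy k p y d‖ ^ 2) σS := by
  have hc : Continuous fun d : S2 => ‖phiy k p y d‖ ^ 2 :=
    ((continuous_phiy k p y).norm).pow 2
  obtain ⟨C, hC⟩ := isCompact_univ.exists_bound_of_continuousOn hc.continuousOn
  exact memLp_one_iff_integrable.mp
    (MemLp.of_bound hc.aestronglyMeasurable C
      (Filter.Eventually.of_forall fun d => hC d trivial))

lemma dotR_self_one (d : S2) : dotR (d : R3) (d : R3) = 1 := by
  have hd : ‖(d : R3)‖ = 1 := by simpa [mem_sphere_zero_iff_norm] using d.2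
  have h2 : @inner ℝ R3 _ (d : R3) (d : R3) = 1 := by
    rw [real_inner_self_eq_norm_sq, hd]; norm_num
  rw [PiLp.inner_apply] at h2
  simpa [dotR, RCLike.inner_apply, sq] using h2

lemma N_pos (k : ℝ) (p y : R3) (hp : p ≠ 0) :
    0 < ∫ d : S2, ‖phiy k p y d‖ ^ 2 ∂σS := by
  rw [integral_pos_iff_support_of_nonneg (fun d => by positivity) (integrable_sq_phiy k p y)]
  set W : Set S2 := Subtype.val ⁻¹' ((Submodule.span ℝ {p} : Submodule ℝ R3) : Set R3) with hWdef
  have hWmeas : MeasurableSet W :=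
    ((Submodule.span ℝ {p}).closed_of_finiteDimensional.measurableSet).preimage
      continuous_subtype_val.measurable
  have hWzero : σS W = 0 := by
    show (volume : Measure R3).toSphere W = 0
    rw [Measure.toSphere_apply' _ hWmeas]
    have hsub : (Set.Ioo (0:ℝ) 1) • (Subtype.val '' W) ⊆
        ((Submodule.span ℝ {p} : Submodule ℝ R3) : Set R3) := by
      rintro z ⟨r, hr, v, ⟨w, hw, rfl⟩, rfl⟩
      exact Submodule.smul_mem _ r hw
    have hspan : (Submodule.span ℝ {p} : Submodule ℝ R3) ≠ ⊤ := by
      intro heq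
      have h1 : Module.finrank ℝ (Submodule.span ℝ {p} : Submodule ℝ R3) = 1 :=
        finrank_span_singleton hp
      rw [heq] at h1
      have h3 : Module.finrank ℝ (⊤ : Submodule ℝ R3) = 3 := by
        rw [finrank_top]; exact finrank_euclideanSpace_fin
      omega
    have := Measure.addHaar_submodule (volume : Measure R3) _ hspan
    rw [measure_mono_null hsub this, mul_zero]
  have hcompl : (Function.support fun d : S2 => ‖phiy k p y d‖ ^ 2)ᶜ ⊆ W := by
    intro d hd
    simp only [Set.mem_compl_iff, Function.mem_support, not_not] at hd
    have hzero : phiy k p y d = 0 := by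
      have : ‖phiy k p y d‖ = 0 := by
        have := sq_eq_zero_iff.mp hd; simpa using this
      exact norm_eq_zero.mp this
    have hV : crossc (crossc (cm (d : R3)) (cm p)) (cm (d : R3)) = 0 := by
      unfold phiy at hzero
      rcases smul_eq_zero.mp hzero with h | h
      · exact absurd h (Complex.exp_ne_zero _)
      · exact h
    have hVi : ∀ i, crossc (crossc (cm (d : R3)) (cm p)) (cm (d : R3)) i
        = ((dotR (d : R3) (d : R3)) * p i - (dotR (d : R3) p) * (d : R3) i : ℝ) := by
      intro i
      fin_cases i <;>
        · simp only [crossc, crossProduct, cm, dotR, Fin.sum_univ_three, LinearMap.mk₂_apply,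
            Matrix.cons_val_zero, Matrix.cons_val_one, Matrix.head_cons, Matrix.cons_val_two,
            Matrix.tail_cons]
          push_cast
          first
            | rfl
            | ring
    have hpi : ∀ i, p i = (dotR (d : R3) p) * (d : R3) i := by
      intro i
      have h0 := hVi i
      rw [hV] at h0
      have h0' : (((dotR (d : R3) (d : R3)) * p i - (dotR (d : R3) p) * (d : R3) i : ℝ) : ℂ)
          = 0 := by rw [← h0]; rfl
      have : ((dotR (d : R3) (d : R3)) * p i - (dotR (d : R3) p) * (d : R3) i : ℝ) = (0 : ℝ) := by
        exact_mod_cast h0'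
      rw [dotR_self_one, one_mul] at this
      linarith
    set t : ℝ := dotR (d : R3) p with ht
    have htne : t ≠ 0 := by
      intro h0
      apply hp
      ext i
      rw [hpi i, h0, zero_mul]
      rfl
    have hd_eq : (d : R3) = t⁻¹ • p := by
      ext i
      have := hpi i
      simp only [PiLp.smul_apply, smul_eq_mul]
      field_simp
      linarith [hpi i]
    show (d : R3) ∈ (Submodule.span ℝ {p} : Submodule ℝ R3)
    rw [hd_eq]
    exact Submodule.smul_mem _ _ (Submodule.mem_span_singleton_self p)
  have hunivpos : 0 < σS Set.univ := by
    show 0 < (volume : Measure R3).toSphere Set.univ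
    rw [Measure.toSphere_apply_univ]
    have h1 : (0:ℝ≥0∞) < volume (ball (0:R3) 1) := measure_ball_pos _ _ one_pos
    have h2 : (Module.finrank ℝ R3 : ℝ≥0∞) ≠ 0 := by
      simp [finrank_euclideanSpace_fin]
    exact ENNReal.mul_pos h2 h1.ne'
  have hle : σS Set.univ ≤ σS (Function.support fun d : S2 => ‖phiy k p y d‖ ^ 2) := by
    calc σS Set.univ = σS ((Function.support fun d : S2 => ‖phiy k p y d‖ ^ 2) ∪
          (Function.support fun d : S2 => ‖phiy k p y d‖ ^ 2)ᶜ) := by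
          rw [Set.union_compl_self]
      _ ≤ σS (Function.support fun d : S2 => ‖phiy k p y d‖ ^ 2) +
          σS (Function.support fun d : S2 => ‖phiy k p y d‖ ^ 2)ᶜ := measure_union_le _ _
      _ = σS (Function.support fun d : S2 => ‖phiy k p y d‖ ^ 2) := by
          rw [measure_mono_null hcompl hWzero, add_zero]
  exact lt_of_lt_of_le hunivpos hle



/-- **Theorem 4.6 (lower bound).** -/
theorem stmt4 (k : ℝ) (hk : 0 < k) (p : R3) (hp : p ≠ 0) (Ω : Set R3)
    (hΩmeas : MeasurableSet Ω) (hΩbdd : Bornology.IsBounded Ω) (hΩpos : 0 < volume Ω)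
    (T : Lp C3 2 (volume.restrict Ω) →L[ℂ] Lp C3 2 (volume.restrict Ω))
    (c : ℝ) (hc : 0 < c)
    (hcoer : ∀ h ∈ closure (ranHt k Ω), c * ‖h‖ ^ 2 ≤ ‖(inner ℂ (T h) h : ℂ)‖)
    (y : R3) (ψ : R3 → C3) (hψ : MemLp ψ 2 (volume.restrict Ω))
    (hψ0 : ¬ ψ =ᵐ[volume.restrict Ω] (0 : R3 → C3))
    (hrange : ∀ᵐ (d : S2) ∂σS, phiy k p y d = hergSt k Ω ψ d) :
    0 < c * (∫ d : S2, ‖phiy k p y d‖ ^ 2 ∂σS) ^ 2 / (∫ x in Ω, ‖ψ x‖ ^ 2) ∧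
      c * (∫ d : S2, ‖phiy k p y d‖ ^ 2 ∂σS) ^ 2 / (∫ x in Ω, ‖ψ x‖ ^ 2) ≤
        IDSM k Ω T p y := by
  classical
  haveI : IsFiniteMeasure (volume.restrict Ω) := by
    constructor
    rw [Measure.restrict_apply_univ]
    exact hΩbdd.measure_lt_top
  set φ : S2 → C3 := phiy k p y with hφdef
  have hmemherg : MemLp (herg k φ) 2 (volume.restrict Ω) := memℒp_herg k p y Ω
  set h : Lp C3 2 (volume.restrict Ω) := toL2 (volume.restrict Ω) (herg k φ) with hh
  have hcoe : (h : R3 → C3) =ᵐ[volume.restrict Ω] herg k φ := by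
    rw [hh, toL2, dif_pos hmemherg]
    exact hmemherg.coeFn_toLp
  have hmem : h ∈ ranHt k Ω :=
    ⟨φ, memℒp_phiy k p y, Filter.Eventually.of_forall (fun d => dotc_phiy k p y d), rfl⟩
  have hcoer' := hcoer h (subset_closure hmem)
  have hTh : Integrable (fun x => (T h : R3 → C3) x) (volume.restrict Ω) :=
    (Lp.memLp (T h)).integrable one_le_two
  have key1 : (∫ d : S2, hdot (Fop k Ω T φ d) (φ d) ∂σS) = (inner ℂ h (T h) : ℂ) := by
    calc (∫ d : S2, hdot (Fop k Ω T φ d) (φ d) ∂σS)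
        = ∫ d : S2, hdot (∫ x in Ω, Complex.exp (-(Complex.I * k * (dotR x (d : R3)))) •
            (T h : R3 → C3) x) (φ d) ∂σS := by
          refine integral_congr_ae (Filter.Eventually.of_forall fun d => ?_)
          exact proj_hdot d _ _ (dotc_phiy k p y d)
      _ = ∫ x in Ω, ⟪herg k φ x, (T h : R3 → C3) x⟫ := swap_key k p y Ω hTh
      _ = ∫ x in Ω, ⟪(h : R3 → C3) x, (T h : R3 → C3) x⟫ := by
          refine integral_congr_ae (hcoe.mono fun x hx => ?_)
          dsimp only
          rw [hx]
      _ = (inner ℂ h (T h) : ℂ) := (L2.inner_def h (T h)).symm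
  have hIDSM : IDSM k Ω T p y = ‖(inner ℂ (T h) h : ℂ)‖ := by
    unfold IDSM
    rw [← hφdef, key1]
    exact norm_inner_symm h (T h)
  have hψint : Integrable ψ (volume.restrict Ω) := hψ.integrable one_le_two
  set ψL2 : Lp C3 2 (volume.restrict Ω) := hψ.toLp ψ with hψL2
  have hcoeψ : (ψL2 : R3 → C3) =ᵐ[volume.restrict Ω] ψ := hψ.coeFn_toLp
  set N : ℝ := ∫ d : S2, ‖φ d‖ ^ 2 ∂σS with hN
  have key2 : (inner ℂ h ψL2 : ℂ) = (N : ℂ) := by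
    calc (inner ℂ h ψL2 : ℂ) = ∫ x in Ω, ⟪(h : R3 → C3) x, (ψL2 : R3 → C3) x⟫ :=
          L2.inner_def h ψL2
      _ = ∫ x in Ω, ⟪herg k φ x, ψ x⟫ := by
          refine integral_congr_ae ((hcoe.and hcoeψ).mono fun x hx => ?_)
          dsimp only
          rw [hx.1, hx.2]
      _ = ∫ d : S2, hdot (∫ x in Ω, Complex.exp (-(Complex.I * k * (dotR x (d : R3)))) • ψ x)
            (φ d) ∂σS := (swap_key k p y Ω hψint).symm
      _ = ∫ d : S2, hdot (hergSt k Ω ψ d) (φ d) ∂σS := by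
          refine integral_congr_ae (Filter.Eventually.of_forall fun d => ?_)
          exact (proj_hdot d _ _ (dotc_phiy k p y d)).symm
      _ = ∫ d : S2, hdot (φ d) (φ d) ∂σS := by
          refine integral_congr_ae (hrange.mono fun d hd => ?_)
          dsimp only
          rw [hd]
      _ = ∫ d : S2, ((‖φ d‖ ^ 2 : ℝ) : ℂ) ∂σS := by
          refine integral_congr_ae (Filter.Eventually.of_forall fun d => ?_)
          exact hdot_self (φ d)
      _ = (N : ℂ) := integral_ofReal
  have hNpos : 0 < N := N_pos k p y hp
  have hCS : N ≤ ‖h‖ * ‖ψL2‖ := by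
    have h1 := norm_inner_le_norm (𝕜 := ℂ) h ψL2
    rw [key2] at h1
    rwa [Complex.norm_real, Real.norm_of_nonneg hNpos.le] at h1
  have hψnorm : ‖ψL2‖ ^ 2 = ∫ x in Ω, ‖ψ x‖ ^ 2 := by
    have h1 : (inner ℂ ψL2 ψL2 : ℂ) = ((∫ x in Ω, ‖ψ x‖ ^ 2 : ℝ) : ℂ) := by
      rw [L2.inner_def]
      calc ∫ x in Ω, ⟪(ψL2 : R3 → C3) x, (ψL2 : R3 → C3) x⟫
          = ∫ x in Ω, ((‖ψ x‖ ^ 2 : ℝ) : ℂ) := by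
            refine integral_congr_ae (hcoeψ.mono fun x hx => ?_)
            dsimp only
            rw [hx, inner_self_eq_norm_sq_to_K]
            norm_cast
        _ = ((∫ x in Ω, ‖ψ x‖ ^ 2 : ℝ) : ℂ) := integral_ofReal
    have h2 : (inner ℂ ψL2 ψL2 : ℂ) = ((‖ψL2‖ ^ 2 : ℝ) : ℂ) := by
      rw [inner_self_eq_norm_sq_to_K]
      norm_cast
    exact_mod_cast (h2.symm.trans h1)
  have hψL2ne : ψL2 ≠ 0 := by
    intro h0
    apply hψ0
    have : (ψL2 : R3 → C3) =ᵐ[volume.restrict Ω] 0 := by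
      rw [h0]
      exact Lp.coeFn_zero _ _ _
    exact hcoeψ.symm.trans this
  have hψpos : 0 < ∫ x in Ω, ‖ψ x‖ ^ 2 := by
    rw [← hψnorm]
    exact pow_pos (norm_pos_iff.mpr hψL2ne) 2
  have hhn : N ^ 2 / (∫ x in Ω, ‖ψ x‖ ^ 2) ≤ ‖h‖ ^ 2 := by
    rw [div_le_iff₀ hψpos, ← hψnorm]
    calc N ^ 2 ≤ (‖h‖ * ‖ψL2‖) ^ 2 := by
          exact pow_le_pow_left₀ hNpos.le hCS 2
      _ = ‖h‖ ^ 2 * ‖ψL2‖ ^ 2 := by ring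
  constructor
  · apply div_pos
    · exact mul_pos hc (pow_pos hNpos 2)
    · exact hψpos
  · calc c * N ^ 2 / (∫ x in Ω, ‖ψ x‖ ^ 2) = c * (N ^ 2 / (∫ x in Ω, ‖ψ x‖ ^ 2)) := by ring
      _ ≤ c * ‖h‖ ^ 2 := mul_le_mul_of_nonneg_left hhn hc.le
      _ ≤ ‖(inner ℂ (T h) h : ℂ)‖ := hcoer'
      _ = IDSM k Ω T p y := hIDSM.symm
end
end

section
/- (Theorem 3.2(d), sufficiency) Let k > 0, let Ω ⊂ ℝ³ be a nonempty bounded open set, let p ∈ ℝ³, and let y ∈ Ω. Then there exists f ∈ L²(Ω,ℂ³) such that (d×p)×d · e^{−ik d·y} = d × (∫_Ω f(x) e^{−ik x·d} dx) × d for every d ∈ S². -/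
open MeasureTheory Metric Complex

noncomputable section

lemma dotR_inner (a b : R3) : dotR a b = (inner ℝ a b : ℝ) := by
  simp [dotR, PiLp.inner_apply, RCLike.inner_apply, conj_trivial, mul_comm]

lemma dotR_comm (a b : R3) : dotR a b = dotR b a := by
  simp [dotR, mul_comm]

lemma dotR_add_left (a b c : R3) : dotR (a + b) c = dotR a c + dotR b c := by
  simp [dotR, add_mul, Finset.sum_add_distrib]

lemma crossc_smul_right (a b : C3) (A : ℂ) : crossc a (A • b) = A • crossc a b := by
  ext i
  fin_cases i <;> simp [crossc, cross_apply, PiLp.smul_apply, smul_eq_mul] <;> ring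

lemma crossc_smul_left (a b : C3) (A : ℂ) : crossc (A • a) b = A • crossc a b := by
  ext i
  fin_cases i <;> simp [crossc, cross_apply, PiLp.smul_apply, smul_eq_mul] <;> ring

lemma cont_exp (k : ℝ) (d : R3) :
    Continuous fun x : R3 => Complex.exp (-(Complex.I * k * (dotR x d))) := by
  have h1 : Continuous fun x : R3 => dotR x d := by
    simp only [dotR_inner]; exact continuous_id.inner continuous_const
  exact Complex.continuous_exp.comp
    ((continuous_const.mul (Complex.continuous_ofReal.comp h1)).neg)

lemma rot_int (k ε : ℝ) (d : R3) (hd : ‖d‖ = 1) :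
    (∫ z in closedBall (0:R3) ε, Complex.exp (-(Complex.I * k * (dotR z d)))) =
    ∫ z in closedBall (0:R3) ε,
      Complex.exp (-(Complex.I * k * (dotR z (EuclideanSpace.single 0 (1:ℝ))))) := by
  set e₀ : R3 := EuclideanSpace.single 0 (1:ℝ) with he₀def
  have he₀ : ‖e₀‖ = 1 := by simp [he₀def, EuclideanSpace.norm_single]
  set R := Submodule.reflection (ℝ ∙ (d - e₀))ᗮ with hRdef
  have hRd : R d = e₀ := Submodule.reflection_sub (by rw [hd, he₀])
  have hzd : ∀ z : R3, dotR z d = dotR (R z) e₀ := by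
    intro z
    rw [dotR_inner, dotR_inner, ← hRd, R.inner_map_map]
  have hpre : (R : R3 → R3) ⁻¹' closedBall (0:R3) ε = closedBall 0 ε := by
    ext z
    simp [mem_closedBall, dist_zero_right, R.norm_map]
  have emb : MeasurableEmbedding (R : R3 → R3) := R.toHomeomorph.measurableEmbedding
  calc (∫ z in closedBall (0:R3) ε, Complex.exp (-(Complex.I * k * (dotR z d))))
      = ∫ z in (R : R3 → R3) ⁻¹' closedBall (0:R3) ε,
          Complex.exp (-(Complex.I * k * (dotR (R z) e₀))) := by
        rw [hpre]; simp only [hzd]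
    _ = ∫ w in closedBall (0:R3) ε, Complex.exp (-(Complex.I * k * (dotR w e₀))) :=
        R.measurePreserving.setIntegral_preimage_emb emb
          (fun w => Complex.exp (-(Complex.I * k * (dotR w e₀)))) _

lemma trans_int (k ε : ℝ) (y d : R3) :
    (∫ x in closedBall y ε, Complex.exp (-(Complex.I * k * (dotR x d)))) =
    Complex.exp (-(Complex.I * k * (dotR y d))) *
      ∫ z in closedBall (0:R3) ε, Complex.exp (-(Complex.I * k * (dotR z d))) := by
  have hmp : MeasurePreserving (fun z : R3 => z + y) volume volume :=
    measurePreserving_add_right volume y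
  have emb : MeasurableEmbedding (fun z : R3 => z + y) :=
    (Homeomorph.addRight y).measurableEmbedding
  have hpre : (fun z : R3 => z + y) ⁻¹' closedBall y ε = closedBall (0:R3) ε := by
    ext z; simp [mem_closedBall, dist_eq_norm]
  calc (∫ x in closedBall y ε, Complex.exp (-(Complex.I * k * (dotR x d))))
      = ∫ z in (fun z : R3 => z + y) ⁻¹' closedBall y ε,
          Complex.exp (-(Complex.I * k * (dotR (z + y) d))) :=
        (hmp.setIntegral_preimage_emb emb
          (fun x => Complex.exp (-(Complex.I * k * (dotR x d)))) _).symm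
    _ = ∫ z in closedBall (0:R3) ε,
          Complex.exp (-(Complex.I * k * (dotR y d))) *
            Complex.exp (-(Complex.I * k * (dotR z d))) := by
        rw [hpre]
        refine integral_congr_ae (Filter.Eventually.of_forall fun z => ?_)
        dsimp only
        rw [dotR_add_left, ← Complex.exp_add]
        congr 1
        push_cast
        ring
    _ = _ := integral_const_mul _ _

lemma C_ne (k ε : ℝ) (hk : 0 < k) (hε : 0 < ε) (hεk : ε * k ≤ 1) :
    (∫ z in closedBall (0:R3) ε,
      Complex.exp (-(Complex.I * k * (dotR z (EuclideanSpace.single 0 (1:ℝ)))))) ≠ 0 := by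
  set e₀ : R3 := EuclideanSpace.single 0 (1:ℝ) with he₀def
  have he₀ : ‖e₀‖ = 1 := by simp [he₀def, EuclideanSpace.norm_single]
  have hint : IntegrableOn (fun z : R3 => Complex.exp (-(Complex.I * k * (dotR z e₀))))
      (closedBall (0:R3) ε) :=
    (cont_exp k e₀).continuousOn.integrableOn_compact (isCompact_closedBall _ _)
  have hre : ∀ z : R3, (Complex.exp (-(Complex.I * k * (dotR z e₀)))).re
      = Real.cos (k * dotR z e₀) := fun z => by
    rw [show -(Complex.I * k * (dotR z e₀ : ℝ)) = ((-(k * dotR z e₀) : ℝ) : ℂ) * Complex.I by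
      push_cast; ring]
    rw [Complex.exp_ofReal_mul_I_re, Real.cos_neg]
  have hbound : ∀ z ∈ closedBall (0:R3) ε,
      Real.cos 1 ≤ (Complex.exp (-(Complex.I * k * (dotR z e₀)))).re := by
    intro z hz
    rw [hre z]
    have habs : |k * dotR z e₀| ≤ 1 := by
      have h1 : |dotR z e₀| ≤ ‖z‖ := by
        rw [dotR_inner]
        calc |(inner ℝ z e₀ : ℝ)| ≤ ‖z‖ * ‖e₀‖ := abs_real_inner_le_norm z e₀
          _ = ‖z‖ := by rw [he₀, mul_one]
      have hz' : ‖z‖ ≤ ε := by simpa [dist_zero_right] using mem_closedBall.mp hz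
      have : |k * dotR z e₀| = k * |dotR z e₀| := by
        rw [abs_mul, abs_of_pos hk]
      rw [this]
      calc k * |dotR z e₀| ≤ k * ε := by nlinarith
        _ ≤ 1 := by nlinarith
    calc Real.cos 1 ≤ Real.cos |k * dotR z e₀| :=
          Real.cos_le_cos_of_nonneg_of_le_pi (abs_nonneg _)
            (by linarith [Real.pi_gt_three]) habs
      _ = Real.cos (k * dotR z e₀) := Real.cos_abs _
  have hvol : 0 < (volume (closedBall (0:R3) ε)).toReal :=
    ENNReal.toReal_pos (measure_closedBall_pos volume _ hε).ne' measure_closedBall_lt_top.ne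
  have hcos1 : 0 < Real.cos 1 :=
    Real.cos_pos_of_mem_Ioo ⟨by linarith [Real.pi_gt_three], by linarith [Real.pi_gt_three]⟩
  have key : Real.cos 1 * (volume (closedBall (0:R3) ε)).toReal ≤
      ∫ z in closedBall (0:R3) ε, (Complex.exp (-(Complex.I * k * (dotR z e₀)))).re :=
    setIntegral_ge_of_const_le_real measurableSet_closedBall measure_closedBall_lt_top.ne
      hbound hint.re
  have h2 : (0:ℝ) <
      (∫ z in closedBall (0:R3) ε, Complex.exp (-(Complex.I * k * (dotR z e₀)))).re := by
    have h3 : (∫ z in closedBall (0:R3) ε, (Complex.exp (-(Complex.I * k * (dotR z e₀)))).re)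
        = (∫ z in closedBall (0:R3) ε, Complex.exp (-(Complex.I * k * (dotR z e₀)))).re := by
      simpa using integral_re hint
    calc (0:ℝ) < Real.cos 1 * (volume (closedBall (0:R3) ε)).toReal :=
          mul_pos hcos1 hvol
      _ ≤ _ := key
      _ = _ := h3
  intro h0
  rw [h0] at h2
  simp at h2

/-- **Theorem 3.2(d), sufficiency.** -/
theorem stmt11 (k : ℝ) (hk : 0 < k) (Ω : Set R3) (hΩopen : IsOpen Ω)
    (hΩne : Ω.Nonempty) (hΩbdd : Bornology.IsBounded Ω) (p y : R3) (hy : y ∈ Ω) :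
    ∃ f : R3 → C3, MemLp f 2 (volume.restrict Ω) ∧
      ∀ d : S2, phiy k p y d = hergSt k Ω f d := by
  
  obtain ⟨ε₀, hε₀pos, hball⟩ := Metric.isOpen_iff.mp hΩopen y hy
  set ε : ℝ := min (ε₀ / 2) (1 / k) with hεdef
  have hε : 0 < ε := lt_min (by linarith) (by positivity)
  have hεk : ε * k ≤ 1 := by
    have h1 : ε ≤ 1 / k := min_le_right _ _
    rw [le_div_iff₀ hk] at h1
    exact h1
  have hsub : closedBall y ε ⊆ Ω :=
    (closedBall_subset_ball (lt_of_le_of_lt (min_le_left _ _) (by linarith))).trans hball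
  set e₀ : R3 := EuclideanSpace.single 0 (1:ℝ) with he₀def
  set C : ℂ := ∫ z in closedBall (0:R3) ε, Complex.exp (-(Complex.I * k * (dotR z e₀)))
    with hCdef
  have hC : C ≠ 0 := C_ne k ε hk hε hεk
  refine ⟨(closedBall y ε).indicator (fun _ => C⁻¹ • cm p), ?_, ?_⟩
  · exact memLp_indicator_const 2 measurableSet_closedBall (C⁻¹ • cm p)
      (Or.inr ((Measure.restrict_apply_le _ _).trans_lt measure_closedBall_lt_top).ne)
  · intro d
    have hd1 : ‖(d : R3)‖ = 1 := by simpa using mem_sphere_zero_iff_norm.mp d.2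
    have hified : (fun x => Complex.exp (-(Complex.I * k * (dotR x (d : R3)))) •
          (closedBall y ε).indicator (fun _ => C⁻¹ • cm p) x)
        = (closedBall y ε).indicator
            (fun x => Complex.exp (-(Complex.I * k * (dotR x (d : R3)))) • (C⁻¹ • cm p)) := by
      funext x
      by_cases hx : x ∈ closedBall y ε <;> simp [Set.indicator, hx]
    have hJ : (∫ x in Ω, Complex.exp (-(Complex.I * k * (dotR x (d : R3)))) •
          (closedBall y ε).indicator (fun _ => C⁻¹ • cm p) x)
        = Complex.exp (-(Complex.I * k * (dotR (d : R3) y))) • cm p := by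
      rw [hified, setIntegral_indicator measurableSet_closedBall,
        Set.inter_eq_self_of_subset_right hsub, integral_smul_const,
        trans_int k ε y (d : R3), rot_int k ε (d : R3) hd1, ← hCdef, smul_smul,
        mul_assoc, mul_inv_cancel₀ hC, mul_one, dotR_comm y (d : R3)]
    unfold phiy hergSt
    rw [hJ, crossc_smul_right, crossc_smul_left]
end
end
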